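/- Let Θ be an MLL proof structure such that Algorithm A with input Θ outputs yes. Then every ⅋-link of Θ is consistent in the extreme-left DR-graph S_∀ℓ(Θ): if some ⅋-link L were inconsistent, the rewriting system could not reduce T(Θ) to a one-node tree because the ⅋-elimination rule could never be applied to the ⅋-node n_L. -/

import Mathlib

/-! ## MLL formulas, links, proof structures, proof nets, DR-switchings -/

abbrev Occ := ℕ

/-- MLL formulas over the single atom `p`. -/
inductive MLLFormula : Type
  | pos : MLLFormula
  | neg : MLLFormula
  | tensor : MLLFormula → MLLFormula → MLLFormula
  | par : MLLFormula → MLLFormula → MLLFormula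
deriving DecidableEq

/-- MLL links, given by their occurrences. -/
inductive MLLLink : Type
  | id (c1 c2 : Occ) : MLLLink
  | tensor (l r c : Occ) : MLLLink
  | par (l r c : Occ) : MLLLink
deriving DecidableEq

def MLLLink.prems : MLLLink → List Occ
  | .id _ _ => []
  | .tensor l r _ => [l, r]
  | .par l r _ => [l, r]

def MLLLink.concs : MLLLink → List Occ
  | .id c1 c2 => [c1, c2]
  | .tensor _ _ c => [c]
  | .par _ _ c => [c]

def MLLLink.IsPar : MLLLink → Prop
  | .par _ _ _ => True
  | _ => False

/-- An MLL proof structure: a finite set of links over formula occurrences. -/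
structure ProofStructure where
  links : Finset MLLLink
  form : Occ → MLLFormula
  nodupLink : ∀ L ∈ links, (MLLLink.concs L ++ MLLLink.prems L).Nodup
  formOk : ∀ L ∈ links,
    (∀ c1 c2, L = MLLLink.id c1 c2 → form c1 = MLLFormula.pos ∧ form c2 = MLLFormula.neg) ∧
    (∀ l r c, L = MLLLink.tensor l r c → form c = MLLFormula.tensor (form l) (form r)) ∧
    (∀ l r c, L = MLLLink.par l r c → form c = MLLFormula.par (form l) (form r))
  concUnique : ∀ L1 ∈ links, ∀ L2 ∈ links, ∀ x,
    x ∈ MLLLink.concs L1 → x ∈ MLLLink.concs L2 → L1 = L2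
  premUnique : ∀ L1 ∈ links, ∀ L2 ∈ links, ∀ x,
    x ∈ MLLLink.prems L1 → x ∈ MLLLink.prems L2 → L1 = L2
  premIsConc : ∀ L ∈ links, ∀ x ∈ MLLLink.prems L, ∃ K ∈ links, K ≠ L ∧ x ∈ MLLLink.concs K

/-- The set of occurrences of a set of links. -/
def occsOf (S : Finset MLLLink) : Set Occ :=
  {x | ∃ L ∈ S, x ∈ MLLLink.concs L ∨ x ∈ MLLLink.prems L}

/-- `x` is a conclusion of the set of links `S`, i.e. a conclusion of some link of `S`
that is not a premise of any link of `S`. -/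
def IsConcOfSet (S : Finset MLLLink) (x : Occ) : Prop :=
  (∃ L ∈ S, x ∈ MLLLink.concs L) ∧ ∀ L ∈ S, x ∉ MLLLink.prems L

/-- Sequentializability: the inductive construction of MLL proof nets, mirroring
the ID, ⊗ and ⅋ rules of the MLL sequent calculus. -/
inductive Sequentializable (form : Occ → MLLFormula) : Finset MLLLink → Prop
  | id (c1 c2 : Occ) : c1 ≠ c2 → form c1 = MLLFormula.pos → form c2 = MLLFormula.neg →
      Sequentializable form {MLLLink.id c1 c2}
  | tensor (S1 S2 : Finset MLLLink) (l r c : Occ) :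
      Sequentializable form S1 → Sequentializable form S2 →
      (∀ x, x ∈ occsOf S1 → x ∉ occsOf S2) →
      IsConcOfSet S1 l → IsConcOfSet S2 r →
      c ∉ occsOf S1 → c ∉ occsOf S2 →
      form c = MLLFormula.tensor (form l) (form r) →
      Sequentializable form (insert (MLLLink.tensor l r c) (S1 ∪ S2))
  | par (S : Finset MLLLink) (l r c : Occ) :
      Sequentializable form S →
      l ≠ r → IsConcOfSet S l → IsConcOfSet S r →
      c ∉ occsOf S →
      form c = MLLFormula.par (form l) (form r) →
      Sequentializable form (insert (MLLLink.par l r c) S)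

/-- An MLL proof net is a sequentializable MLL proof structure. -/
def ProofStructure.IsProofNet (Θ : ProofStructure) : Prop :=
  Sequentializable Θ.form Θ.links

/-- The edges contributed by a link under a DR-switching `sw`
(`sw L = false` selects the left premise of a ⅋-link, `true` the right one). -/
def drStep (sw : MLLLink → Bool) (L : MLLLink) (x y : Occ) : Prop :=
  match L with
  | .id c1 c2 => x = c1 ∧ y = c2
  | .tensor l r c => (x = l ∧ y = c) ∨ (x = r ∧ y = c)
  | .par l r c => if sw (MLLLink.par l r c) = true then x = r ∧ y = c else x = l ∧ y = c

/-- The DR-graph of a proof structure under a DR-switching. -/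
def DRGraph (Θ : ProofStructure) (sw : MLLLink → Bool) : SimpleGraph Occ where
  Adj x y := x ≠ y ∧ ∃ L ∈ Θ.links, drStep sw L x y ∨ drStep sw L y x
  symm := by
    constructor
    rintro x y ⟨hxy, L, hL, h⟩
    exact ⟨hxy.symm, L, hL, h.symm⟩
  loopless := by constructor; rintro x ⟨hxx, _⟩; exact hxx rfl

def ProofStructure.occSet (Θ : ProofStructure) : Set Occ := occsOf Θ.links

/-- The extreme left DR-switching `S_∀ℓ`. -/
def extremeLeft : MLLLink → Bool := fun _ => false

/-- The extreme left DR-graph `S_∀ℓ(Θ)`. -/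
def DRGraphL (Θ : ProofStructure) : SimpleGraph Occ := DRGraph Θ extremeLeft

/-- `S_∀ℓ(Θ)` is a tree (on the vertex set of occurrences of `Θ`). -/
def DRTreeL (Θ : ProofStructure) : Prop :=
  ((DRGraphL Θ).induce Θ.occSet).IsTree

/-- Consistency of a ⅋-link with premises `l`, `r` and conclusion `c`:
the unique path in the tree `S_∀ℓ(Θ)` from `l` to `r` does not contain `c`. -/
def ParLinkConsistent (Θ : ProofStructure) (l r c : Occ) : Prop :=
  ∀ p : (DRGraphL Θ).Walk l r, p.IsPath → c ∉ p.support

/-- Every ⅋-link of `Θ` is consistent in `S_∀ℓ(Θ)`. -/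
def AllParConsistent (Θ : ProofStructure) : Prop :=
  ∀ l r c, MLLLink.par l r c ∈ Θ.links → ParLinkConsistent Θ l r c

/-- The edge relation of the directed graph `G(S_∀ℓ(Θ))` on ⅋-links:
`(L1, L2)` is an edge when the unique path in `S_∀ℓ(Θ)` between the premises of `L2`
contains the node of `L1`. -/
def deNMRel (Θ : ProofStructure) (L1 L2 : MLLLink) : Prop :=
  L1 ∈ Θ.links ∧ L2 ∈ Θ.links ∧ L1 ≠ L2 ∧
  ∃ l1 r1 c1, L1 = MLLLink.par l1 r1 c1 ∧
  ∃ l2 r2 c2, L2 = MLLLink.par l2 r2 c2 ∧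
  ∃ p : (DRGraphL Θ).Walk l2 r2, p.IsPath ∧ c1 ∈ p.support

/-- Acyclicity of a directed graph given by a relation. -/
def DirAcyclicRel {α : Type} (R : α → α → Prop) : Prop :=
  ∀ x, ¬ Relation.TransGen R x x

/-- `x` is the left premise of the ⅋-link `P` of `Θ`. -/
def leftPremOfPar (Θ : ProofStructure) (x : Occ) (P : MLLLink) : Prop :=
  P ∈ Θ.links ∧ ∃ r c, P = MLLLink.par x r c

/-- `x` is the right premise of the ⅋-link `P` of `Θ`. -/
def rightPremOfPar (Θ : ProofStructure) (x : Occ) (P : MLLLink) : Prop :=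
  P ∈ Θ.links ∧ ∃ l c, P = MLLLink.par l x c

/-- `x` is a premise of some ⅋-link of `Θ`. -/
def premOfParLink (Θ : ProofStructure) (x : Occ) : Prop :=
  ∃ P, leftPremOfPar Θ x P ∨ rightPremOfPar Θ x P

/-- `x` is a conclusion of the proof structure `Θ`. -/
def IsConcOfTheta (Θ : ProofStructure) (x : Occ) : Prop :=
  IsConcOfSet Θ.links x

/-! ## deNM-trees, the translation T(Θ), the rewriting system, and Algorithm A -/

/-- Labels `ℓ_L` and `r_L` for ⅋-links `L`. -/
inductive DLabel : Type
  | left (L : MLLLink) : DLabel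
  | right (L : MLLLink) : DLabel
deriving DecidableEq

/-- A node of a deNM-tree is either a labeled node carrying a finite label set,
or a ⅋-node labeled by a ⅋-link. -/
inductive DNodeKind : Type
  | labeled (s : Finset DLabel) : DNodeKind
  | par (L : MLLLink) : DNodeKind

/-- The raw data of a deNM-tree: a finite vertex set, a node-kind assignment,
a finite edge set, and for each ⅋-node the neighbour attached at its upper port. -/
structure PreTree where
  V : Finset ℕ
  kind : ℕ → DNodeKind
  edges : Finset (Sym2 ℕ)
  upper : ℕ → Option ℕ

/-- The underlying undirected graph of a deNM-tree. -/
def PreTree.graph (T : PreTree) : SimpleGraph ℕ where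
  Adj x y := x ≠ y ∧ s(x, y) ∈ T.edges
  symm := by
    constructor
    rintro x y ⟨hxy, he⟩
    exact ⟨hxy.symm, by rwa [Sym2.eq_swap]⟩
  loopless := by constructor; rintro x ⟨hxx, _⟩; exact hxx rfl

/-- The degree of a vertex. -/
def PreTree.degree (T : PreTree) (v : ℕ) : ℕ :=
  (T.edges.filter (fun e => v ∈ e)).card

/-- `n` is a labeled node of `T`. -/
def PreTree.IsLabeledVertex (T : PreTree) (n : ℕ) : Prop :=
  n ∈ T.V ∧ ∃ s, T.kind n = DNodeKind.labeled s

/-- `T` is a deNM-tree: a finite tree whose ⅋-nodes have degree 1 or 2 and have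
their upper port attached to a neighbour. -/
def PreTree.IsDeNMTree (T : PreTree) : Prop :=
  (∀ e ∈ T.edges, ∀ x ∈ e, x ∈ T.V) ∧
  (∀ e ∈ T.edges, ¬ e.IsDiag) ∧
  (T.graph.induce (↑T.V : Set ℕ)).IsTree ∧
  ∀ v ∈ T.V, ∀ L, T.kind v = DNodeKind.par L →
    (∃ u ∈ T.V, T.upper v = some u ∧ s(v, u) ∈ T.edges) ∧
    1 ≤ T.degree v ∧ T.degree v ≤ 2

/-- ⅋-consistency of a deNM-tree: for every ⅋-node `v` (for the ⅋-link `L`),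
the unique path between its upper-port neighbour (the left premise position)
and any labeled node carrying `r_L` (the right premise position) avoids `v`. -/
def PreTree.ParConsistentD (T : PreTree) : Prop :=
  ∀ v ∈ T.V, ∀ L, T.kind v = DNodeKind.par L →
    ∀ u, T.upper v = some u →
      ∀ w ∈ T.V, ∀ s, T.kind w = DNodeKind.labeled s → DLabel.right L ∈ s →
        ∀ p : T.graph.Walk u w, p.IsPath → v ∉ p.support

/-- The induced directed relation on ⅋-nodes of a deNM-tree:
`(v1, v2)` when the path between the two premise positions of `v2`'s ⅋-link
passes through `v1`. -/
def PreTree.dirRel (T : PreTree) (v1 v2 : ℕ) : Prop :=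
  v1 ∈ T.V ∧ v2 ∈ T.V ∧ v1 ≠ v2 ∧
  (∃ L1, T.kind v1 = DNodeKind.par L1) ∧
  ∃ L2, T.kind v2 = DNodeKind.par L2 ∧
    ∃ u, T.upper v2 = some u ∧
      ∃ w ∈ T.V, ∃ s, T.kind w = DNodeKind.labeled s ∧ DLabel.right L2 ∈ s ∧
        ∃ p : T.graph.Walk u w, p.IsPath ∧ v1 ∈ p.support

/-- Directed acyclicity of a deNM-tree. -/
def PreTree.DirAcyclicD (T : PreTree) : Prop :=
  ∀ v, ¬ Relation.TransGen T.dirRel v v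

/-! ### The translation `T(Θ)` -/

/-- A ⅋-link of `Θ` gets an auxiliary labeled node exactly when its conclusion is a
premise of another ⅋-link. -/
def hasAux (Θ : ProofStructure) (L : MLLLink) : Prop :=
  L ∈ Θ.links ∧ ∃ l r c, L = MLLLink.par l r c ∧ premOfParLink Θ c

/-- The label contributed by an occurrence `x`: `ℓ_P` if `x` is the left premise of a
⅋-link `P`, `r_P` if `x` is the right premise of `P`. -/
def labelOfOcc (Θ : ProofStructure) (x : Occ) (d : DLabel) : Prop :=
  (∃ P, leftPremOfPar Θ x P ∧ d = DLabel.left P) ∨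
  (∃ P, rightPremOfPar Θ x P ∧ d = DLabel.right P)

/-- The labels carried by the (auxiliary) labeled node of a link `K`:
those contributed by the conclusions of `K`. -/
def linkLabel (Θ : ProofStructure) (K : MLLLink) (d : DLabel) : Prop :=
  ∃ x ∈ MLLLink.concs K, labelOfOcc Θ x d

/-- The node through which the subtree translating `K` connects upwards. -/
def OutIs (Θ : ProofStructure) (main aux : MLLLink → ℕ) (K : MLLLink) (v : ℕ) : Prop :=
  (hasAux Θ K ∧ v = aux K) ∨ (¬ hasAux Θ K ∧ v = main K)

/-- The edges of the translation. -/
def EdgeSpec (Θ : ProofStructure) (main aux : MLLLink → ℕ) (u v : ℕ) : Prop :=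
  (∃ x K M, K ∈ Θ.links ∧ M ∈ Θ.links ∧ x ∈ MLLLink.concs K ∧ x ∈ MLLLink.prems M ∧
      ¬ MLLLink.IsPar M ∧ OutIs Θ main aux K u ∧ v = main M) ∨
  (∃ K l r c, K ∈ Θ.links ∧ MLLLink.par l r c ∈ Θ.links ∧ l ∈ MLLLink.concs K ∧
      OutIs Θ main aux K u ∧ v = main (MLLLink.par l r c)) ∨
  (∃ L, hasAux Θ L ∧ u = main L ∧ v = aux L)

/-- The translation `T(Θ)` is defined: `S_∀ℓ(Θ)` is a tree, no ID-link has both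
conclusions premises of ⅋-links, and no ID-link has one conclusion a conclusion of `Θ`
while the other is a premise of a ⅋-link. -/
def TransDefined (Θ : ProofStructure) : Prop :=
  DRTreeL Θ ∧
  ∀ c1 c2, MLLLink.id c1 c2 ∈ Θ.links →
    ¬(premOfParLink Θ c1 ∧ premOfParLink Θ c2) ∧
    ¬(IsConcOfTheta Θ c1 ∧ premOfParLink Θ c2) ∧
    ¬(IsConcOfTheta Θ c2 ∧ premOfParLink Θ c1)

/-- `T` is (a copy of) the deNM-tree `T(Θ)` translating `Θ`. -/
def IsTranslation (Θ : ProofStructure) (T : PreTree) : Prop :=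
  TransDefined Θ ∧
  ∃ main aux : MLLLink → ℕ,
    (∀ L1 ∈ Θ.links, ∀ L2 ∈ Θ.links, main L1 = main L2 → L1 = L2) ∧
    (∀ L1 L2, hasAux Θ L1 → hasAux Θ L2 → aux L1 = aux L2 → L1 = L2) ∧
    (∀ L1 ∈ Θ.links, ∀ L2, hasAux Θ L2 → main L1 ≠ aux L2) ∧
    (∀ v, v ∈ T.V ↔ ((∃ L ∈ Θ.links, v = main L) ∨ (∃ L, hasAux Θ L ∧ v = aux L))) ∧
    (∀ L ∈ Θ.links, ¬ MLLLink.IsPar L →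
        ∃ s, T.kind (main L) = DNodeKind.labeled s ∧ ∀ d, d ∈ s ↔ linkLabel Θ L d) ∧
    (∀ L ∈ Θ.links, MLLLink.IsPar L → T.kind (main L) = DNodeKind.par L) ∧
    (∀ L, hasAux Θ L →
        ∃ s, T.kind (aux L) = DNodeKind.labeled s ∧ ∀ d, d ∈ s ↔ linkLabel Θ L d) ∧
    (∀ l r c, MLLLink.par l r c ∈ Θ.links →
        ∀ K ∈ Θ.links, l ∈ MLLLink.concs K →
          ∀ u, OutIs Θ main aux K u → T.upper (main (MLLLink.par l r c)) = some u) ∧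
    (∀ e, e ∈ T.edges ↔
        ∃ u v, e = s(u, v) ∧ (EdgeSpec Θ main aux u v ∨ EdgeSpec Θ main aux v u))

/-! ### The rewriting system and Algorithm A -/

def replaceN (v a : ℕ) : ℕ → ℕ := fun x => if x = v then a else x

/-- Eliminate the node `v`, letting `a` absorb the remaining connections of `v`
(used by the ⅋-elimination rule). -/
def PreTree.elimAt (T : PreTree) (v a : ℕ) : PreTree where
  V := T.V.erase v
  kind := T.kind
  edges := (T.edges.image (Sym2.map (replaceN v a))).filter (fun e => ¬ e.IsDiag)
  upper := T.upper

def mergeKind (k k' : DNodeKind) : DNodeKind :=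
  match k, k' with
  | DNodeKind.labeled s, DNodeKind.labeled s' => DNodeKind.labeled (s ∪ s')
  | k, _ => k

/-- Merge the labeled node `n'` into the labeled node `a`, taking the union of the
label sets (used by the union rule). -/
def PreTree.contract (T : PreTree) (a n' : ℕ) : PreTree where
  V := T.V.erase n'
  kind := fun x => if x = a then mergeKind (T.kind a) (T.kind n') else T.kind x
  edges := (T.edges.image (Sym2.map (replaceN n' a))).filter (fun e => ¬ e.IsDiag)
  upper := fun x => (T.upper x).map (replaceN n' a)

/-- The three rewrite rules. -/
inductive RRule : Type
  | elim | union | jump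

/-- A configuration of Algorithm A: the current deNM-tree, the active (labeled)
node, and the set of ⅋-links to which the local jump rule has been applied. -/
structure Config where
  tree : PreTree
  active : ℕ
  jumped : Finset MLLLink

/-- One application of a rewrite rule at the active node. -/
inductive Step : RRule → Config → Config → Prop
  | elim (c : Config) (v : ℕ) (L : MLLLink) (s : Finset DLabel) :
      c.active ∈ c.tree.V → v ∈ c.tree.V →
      c.tree.kind c.active = DNodeKind.labeled s →
      c.tree.kind v = DNodeKind.par L →
      c.tree.upper v = some c.active →
      s(c.active, v) ∈ c.tree.edges →
      DLabel.left L ∈ s → DLabel.right L ∈ s →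
      Step RRule.elim c
        { tree := c.tree.elimAt v c.active, active := c.active, jumped := c.jumped }
  | union (c : Config) (n' : ℕ) (s s' : Finset DLabel) :
      c.active ∈ c.tree.V → n' ∈ c.tree.V → n' ≠ c.active →
      c.tree.kind c.active = DNodeKind.labeled s →
      c.tree.kind n' = DNodeKind.labeled s' →
      s(c.active, n') ∈ c.tree.edges →
      Step RRule.union c
        { tree := c.tree.contract c.active n', active := c.active, jumped := c.jumped }
  | jump (c : Config) (v m : ℕ) (L : MLLLink) (s s' : Finset DLabel) :
      c.active ∈ c.tree.V → v ∈ c.tree.V → m ∈ c.tree.V →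
      c.tree.kind c.active = DNodeKind.labeled s →
      c.tree.kind v = DNodeKind.par L →
      s(c.active, v) ∈ c.tree.edges →
      c.tree.upper v ≠ some c.active →
      c.tree.kind m = DNodeKind.labeled s' →
      DLabel.right L ∈ s' →
      L ∉ c.jumped →
      Step RRule.jump c { tree := c.tree, active := m, jumped := insert L c.jumped }

def StepAny (c c' : Config) : Prop := ∃ r, Step r c c'

/-- No rewrite rule applies. -/
def Stuck (c : Config) : Prop := ∀ r c', ¬ Step r c c'

/-- `s` is the full label set `S_full` of `Θ`. -/
def SfullSpec (Θ : ProofStructure) (s : Finset DLabel) : Prop :=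
  ∀ d, d ∈ s ↔ ∃ l r c, MLLLink.par l r c ∈ Θ.links ∧
    (d = DLabel.left (MLLLink.par l r c) ∨ d = DLabel.right (MLLLink.par l r c))

/-- The terminal tree is a single degree-0 node labeled by `S_full`. -/
def FinalYes (Θ : ProofStructure) (c : Config) : Prop :=
  c.tree.V = {c.active} ∧ c.tree.edges = ∅ ∧
  ∃ s, c.tree.kind c.active = DNodeKind.labeled s ∧ SfullSpec Θ s

/-- Algorithm A with input `Θ` outputs yes. -/
def AlgAYes (Θ : ProofStructure) : Prop :=
  TransDefined Θ ∧
  ∀ T, IsTranslation Θ T → ∀ n, T.IsLabeledVertex n →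
    ∀ c', Relation.ReflTransGen StepAny { tree := T, active := n, jumped := ∅ } c' →
      Stuck c' → FinalYes Θ c'

/-- The local jump rule is applicable (up to the double-application check) at the
active node of `c`, targeting the ⅋-link `L`. -/
def JumpReady (c : Config) (L : MLLLink) : Prop :=
  c.active ∈ c.tree.V ∧ (∃ s, c.tree.kind c.active = DNodeKind.labeled s) ∧
  ∃ v ∈ c.tree.V, c.tree.kind v = DNodeKind.par L ∧
    s(c.active, v) ∈ c.tree.edges ∧ c.tree.upper v ≠ some c.active

/-! ## Construction of the translation -/

noncomputable section
open scoped Classical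

def encL : MLLLink → ℕ
  | .id a b => Nat.pair 0 (Nat.pair a b)
  | .tensor a b c => Nat.pair 1 (Nat.pair a (Nat.pair b c))
  | .par a b c => Nat.pair 2 (Nat.pair a (Nat.pair b c))

theorem encL_inj : Function.Injective encL := by
  intro L1 L2 h
  cases L1 <;> cases L2 <;> simp [encL, Nat.pair_eq_pair] at h <;>
    simp_all

def mainN (L : MLLLink) : ℕ := 2 * encL L
def auxN (L : MLLLink) : ℕ := 2 * encL L + 1

theorem mainN_inj : Function.Injective mainN := by
  intro a b h; exact encL_inj (by unfold mainN at h; omega)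

theorem auxN_inj : Function.Injective auxN := by
  intro a b h; exact encL_inj (by unfold auxN at h; omega)

theorem mainN_ne_auxN (L1 L2 : MLLLink) : mainN L1 ≠ auxN L2 := by
  unfold mainN auxN; omega

/-- The label set of the labeled node of a link `K`. -/
def labelFin (Θ : ProofStructure) (K : MLLLink) : Finset DLabel :=
  ((Θ.links.image DLabel.left) ∪ (Θ.links.image DLabel.right)).filter
    (fun d => linkLabel Θ K d)

theorem mem_labelFin (Θ : ProofStructure) (K : MLLLink) (d : DLabel) :
    d ∈ labelFin Θ K ↔ linkLabel Θ K d := by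
  constructor
  · intro h; exact (Finset.mem_filter.1 h).2
  · intro h
    refine Finset.mem_filter.2 ⟨?_, h⟩
    obtain ⟨x, _, hx⟩ := h
    rcases hx with ⟨P, ⟨hP, _⟩, rfl⟩ | ⟨P, ⟨hP, _⟩, rfl⟩
    · exact Finset.mem_union_left _ (Finset.mem_image_of_mem _ hP)
    · exact Finset.mem_union_right _ (Finset.mem_image_of_mem _ hP)

def outN (Θ : ProofStructure) (K : MLLLink) : ℕ :=
  if hasAux Θ K then auxN K else mainN K

theorem outIs_outN (Θ : ProofStructure) (K : MLLLink) :
    OutIs Θ mainN auxN K (outN Θ K) := by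
  unfold outN OutIs
  by_cases h : hasAux Θ K
  · exact Or.inl ⟨h, by simp [h]⟩
  · exact Or.inr ⟨h, by simp [h]⟩

theorem outIs_unique (Θ : ProofStructure) (K : MLLLink) (u : ℕ)
    (h : OutIs Θ mainN auxN K u) : u = outN Θ K := by
  unfold outN
  rcases h with ⟨h1, rfl⟩ | ⟨h1, rfl⟩ <;> simp [h1]

def TV (Θ : ProofStructure) : Finset ℕ :=
  Θ.links.image mainN ∪ (Θ.links.filter (fun L => hasAux Θ L)).image auxN

theorem mem_TV (Θ : ProofStructure) (v : ℕ) :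
    v ∈ TV Θ ↔ (∃ L ∈ Θ.links, v = mainN L) ∨ (∃ L, hasAux Θ L ∧ v = auxN L) := by
  unfold TV
  simp only [Finset.mem_union, Finset.mem_image, Finset.mem_filter]
  constructor
  · rintro (⟨L, hL, rfl⟩ | ⟨L, ⟨hL, hA⟩, rfl⟩)
    · exact Or.inl ⟨L, hL, rfl⟩
    · exact Or.inr ⟨L, hA, rfl⟩
  · rintro (⟨L, hL, rfl⟩ | ⟨L, hA, rfl⟩)
    · exact Or.inl ⟨L, hL, rfl⟩
    · exact Or.inr ⟨L, ⟨hA.1, hA⟩, rfl⟩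

def TKind (Θ : ProofStructure) : ℕ → DNodeKind := fun n =>
  if h : ∃ L ∈ Θ.links, n = mainN L then
    (if MLLLink.IsPar h.choose then DNodeKind.par h.choose
     else DNodeKind.labeled (labelFin Θ h.choose))
  else if h2 : ∃ L, hasAux Θ L ∧ n = auxN L then
    DNodeKind.labeled (labelFin Θ h2.choose)
  else DNodeKind.labeled ∅

theorem TKind_main (Θ : ProofStructure) (L : MLLLink) (hL : L ∈ Θ.links) :
    TKind Θ (mainN L) =
      (if MLLLink.IsPar L then DNodeKind.par L
       else DNodeKind.labeled (labelFin Θ L)) := by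
  unfold TKind
  have h : ∃ K ∈ Θ.links, mainN L = mainN K := ⟨L, hL, rfl⟩
  rw [dif_pos h]
  have : h.choose = L := mainN_inj h.choose_spec.2.symm
  rw [this]

theorem TKind_aux (Θ : ProofStructure) (L : MLLLink) (hL : hasAux Θ L) :
    TKind Θ (auxN L) = DNodeKind.labeled (labelFin Θ L) := by
  unfold TKind
  have h : ¬ ∃ K ∈ Θ.links, auxN L = mainN K := by
    rintro ⟨K, _, hK⟩; exact mainN_ne_auxN K L hK.symm
  rw [dif_neg h]
  have h2 : ∃ K, hasAux Θ K ∧ auxN L = auxN K := ⟨L, hL, rfl⟩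
  rw [dif_pos h2]
  have : h2.choose = L := auxN_inj h2.choose_spec.2.symm
  rw [this]

/-- Specification of the upper port map. -/
def UpSpec (Θ : ProofStructure) (n u : ℕ) : Prop :=
  ∃ l r c, MLLLink.par l r c ∈ Θ.links ∧ n = mainN (MLLLink.par l r c) ∧
    ∃ K ∈ Θ.links, l ∈ MLLLink.concs K ∧ OutIs Θ mainN auxN K u

theorem upSpec_unique (Θ : ProofStructure) (n u u' : ℕ)
    (h : UpSpec Θ n u) (h' : UpSpec Θ n u') : u = u' := by
  obtain ⟨l, r, c, hP, hn, K, hK, hl, hu⟩ := h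
  obtain ⟨l', r', c', hP', hn', K', hK', hl', hu'⟩ := h'
  have := mainN_inj (hn.symm.trans hn')
  injection this with e1 e2 e3
  subst e1; subst e2; subst e3
  have : K = K' := Θ.concUnique K hK K' hK' l hl hl'
  subst this
  rw [outIs_unique Θ K u hu, outIs_unique Θ K u' hu']

def TUpper (Θ : ProofStructure) : ℕ → Option ℕ := fun n =>
  if h : ∃ u, UpSpec Θ n u then some h.choose else none

theorem TUpper_eq (Θ : ProofStructure) (n u : ℕ) (h : UpSpec Θ n u) :
    TUpper Θ n = some u := by
  unfold TUpper
  have hex : ∃ u, UpSpec Θ n u := ⟨u, h⟩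
  rw [dif_pos hex]
  exact congrArg some (upSpec_unique Θ n hex.choose u hex.choose_spec h)

theorem edgeSpec_mem_TV (Θ : ProofStructure) (u v : ℕ)
    (h : EdgeSpec Θ mainN auxN u v) : u ∈ TV Θ ∧ v ∈ TV Θ := by
  have outmem : ∀ K, K ∈ Θ.links → ∀ w, OutIs Θ mainN auxN K w → w ∈ TV Θ := by
    intro K hK w hw
    rcases hw with ⟨h1, rfl⟩ | ⟨h1, rfl⟩
    · exact (mem_TV Θ _).2 (Or.inr ⟨K, h1, rfl⟩)
    · exact (mem_TV Θ _).2 (Or.inl ⟨K, hK, rfl⟩)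
  rcases h with ⟨x, K, M, hK, hM, _, _, _, hu, rfl⟩ |
    ⟨K, l, r, c, hK, hP, _, hu, rfl⟩ | ⟨L, hL, rfl, rfl⟩
  · exact ⟨outmem K hK u hu, (mem_TV Θ _).2 (Or.inl ⟨M, hM, rfl⟩)⟩
  · exact ⟨outmem K hK u hu, (mem_TV Θ _).2 (Or.inl ⟨_, hP, rfl⟩)⟩
  · exact ⟨(mem_TV Θ _).2 (Or.inl ⟨L, hL.1, rfl⟩), (mem_TV Θ _).2 (Or.inr ⟨L, hL, rfl⟩)⟩

def TEdges (Θ : ProofStructure) : Finset (Sym2 ℕ) :=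
  ((TV Θ ×ˢ TV Θ).image (fun p => s(p.1, p.2))).filter
    (fun e => ∃ u v, e = s(u, v) ∧
      (EdgeSpec Θ mainN auxN u v ∨ EdgeSpec Θ mainN auxN v u))

theorem mem_TEdges (Θ : ProofStructure) (e : Sym2 ℕ) :
    e ∈ TEdges Θ ↔ ∃ u v, e = s(u, v) ∧
      (EdgeSpec Θ mainN auxN u v ∨ EdgeSpec Θ mainN auxN v u) := by
  constructor
  · intro h; exact (Finset.mem_filter.1 h).2
  · rintro ⟨u, v, rfl, h⟩
    refine Finset.mem_filter.2 ⟨?_, ⟨u, v, rfl, h⟩⟩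
    have : u ∈ TV Θ ∧ v ∈ TV Θ := by
      rcases h with h | h
      · exact edgeSpec_mem_TV Θ u v h
      · exact (edgeSpec_mem_TV Θ v u h).symm
    exact Finset.mem_image.2 ⟨(u, v), Finset.mem_product.2 this, rfl⟩

def TT (Θ : ProofStructure) : PreTree :=
  { V := TV Θ, kind := TKind Θ, edges := TEdges Θ, upper := TUpper Θ }

theorem isTranslation_TT (Θ : ProofStructure) (hdef : TransDefined Θ) :
    IsTranslation Θ (TT Θ) := by
  refine ⟨hdef, mainN, auxN, ?_, ?_, ?_, ?_, ?_, ?_, ?_, ?_, ?_⟩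
  · intro L1 _ L2 _ h; exact mainN_inj h
  · intro L1 L2 _ _ h; exact auxN_inj h
  · intro L1 _ L2 _; exact mainN_ne_auxN L1 L2
  · exact mem_TV Θ
  · intro L hL hnp
    refine ⟨labelFin Θ L, ?_, fun d => (mem_labelFin Θ L d)⟩
    show TKind Θ (mainN L) = _
    rw [TKind_main Θ L hL, if_neg hnp]
  · intro L hL hp
    show TKind Θ (mainN L) = _
    rw [TKind_main Θ L hL, if_pos hp]
  · intro L hL
    exact ⟨labelFin Θ L, TKind_aux Θ L hL, fun d => mem_labelFin Θ L d⟩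
  · intro l r c hP K hK hl u hu
    exact TUpper_eq Θ _ u ⟨l, r, c, hP, rfl, K, hK, hl, hu⟩
  · exact mem_TEdges Θ

end
/-! ## Walks under contraction, the invariant, preservation, termination -/

def graphOf (E : Finset (Sym2 ℕ)) : SimpleGraph ℕ where
  Adj x y := x ≠ y ∧ s(x, y) ∈ E
  symm := by
    constructor
    rintro x y ⟨hxy, he⟩
    exact ⟨hxy.symm, by rwa [Sym2.eq_swap]⟩
  loopless := by constructor; rintro x ⟨hxx, _⟩; exact hxx rfl

theorem graph_eq_graphOf (T : PreTree) : T.graph = graphOf T.edges := rfl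

theorem bridge_walk {E : Finset (Sym2 ℕ)} {a b : ℕ} (hab : a ≠ b)
    (hE : s(a, b) ∈ E) (x₀ u : ℕ) (h : replaceN b a x₀ = replaceN b a u) :
    ∃ β : (graphOf E).Walk x₀ u, ∀ z ∈ β.support, z = x₀ ∨ z = u := by
  by_cases hxu : x₀ = u
  · subst hxu; exact ⟨SimpleGraph.Walk.nil, by simp⟩
  · have key : (x₀ = a ∧ u = b) ∨ (x₀ = b ∧ u = a) := by
      unfold replaceN at h
      by_cases h1 : x₀ = b <;> by_cases h2 : u = b <;> simp [h1, h2] at h <;> omega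
    rcases key with ⟨rfl, rfl⟩ | ⟨rfl, rfl⟩
    · exact ⟨(SimpleGraph.Adj.toWalk (show (graphOf E).Adj x₀ u from ⟨hab, hE⟩) : (graphOf E).Walk x₀ u), by simp⟩
    · refine ⟨(SimpleGraph.Adj.toWalk (show (graphOf E).Adj x₀ u from ⟨hab.symm, by rwa [Sym2.eq_swap]⟩) :
        (graphOf E).Walk x₀ u), by simp⟩

theorem lift_walk {E E' : Finset (Sym2 ℕ)} {a b : ℕ} (hab : a ≠ b)
    (hE : s(a, b) ∈ E)
    (hE' : ∀ e' ∈ E', ∃ e ∈ E, Sym2.map (replaceN b a) e = e') :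
    ∀ {x y} (w : (graphOf E').Walk x y) (x₀ y₀ : ℕ),
      replaceN b a x₀ = x → replaceN b a y₀ = y →
      ∃ w₀ : (graphOf E).Walk x₀ y₀, ∀ z ∈ w₀.support, replaceN b a z ∈ w.support := by
  intro x y w
  induction w with
  | nil =>
    intro x₀ y₀ hx hy
    obtain ⟨β, hβ⟩ := bridge_walk hab hE x₀ y₀ (hx.trans hy.symm)
    refine ⟨β, fun z hz => ?_⟩
    rcases hβ z hz with rfl | rfl <;> simp [hx, hy]
  | @cons x m y hadj p ih =>
    intro x₀ y₀ hx hy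
    obtain ⟨hxm, hmem⟩ := hadj
    obtain ⟨e, he, hemap⟩ := hE' _ hmem
    obtain ⟨u, v⟩ := e
    rw [Sym2.map_pair_eq, Sym2.eq_iff] at hemap
    -- normalize so that `replaceN b a u = x` and `replaceN b a v = m`
    obtain ⟨u, v, he, hu, hv⟩ :
        ∃ u v, s(u, v) ∈ E ∧ replaceN b a u = x ∧ replaceN b a v = m := by
      rcases hemap with ⟨h1, h2⟩ | ⟨h1, h2⟩
      · exact ⟨u, v, he, h1, h2⟩
      · exact ⟨v, u, by rwa [Sym2.eq_swap], h2, h1⟩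
    have huv : u ≠ v := fun h => hxm (by rw [← hu, ← hv, h])
    have hadj0 : (graphOf E).Adj u v := ⟨huv, he⟩
    obtain ⟨w₁, hw₁⟩ := ih v y₀ hv hy
    obtain ⟨β, hβ⟩ := bridge_walk hab hE x₀ u (hx.trans hu.symm)
    refine ⟨β.append (SimpleGraph.Walk.cons hadj0 w₁), fun z hz => ?_⟩
    rw [SimpleGraph.Walk.mem_support_append_iff] at hz
    rcases hz with hz | hz
    · rcases hβ z hz with rfl | rfl
      · rw [hx]; exact SimpleGraph.Walk.start_mem_support _
      · rw [hu]; exact SimpleGraph.Walk.start_mem_support _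
    · rw [SimpleGraph.Walk.support_cons, List.mem_cons] at hz
      rcases hz with rfl | hz
      · rw [hu]; exact SimpleGraph.Walk.start_mem_support _
      · show replaceN b a z ∈ x :: p.support
        exact List.mem_cons_of_mem _ (hw₁ z hz)

/-- The key invariant: the ⅋-node `v0` (for the link `P`) is present, and every walk
from a node carrying `ℓ_P` to a node carrying `r_P` passes through `v0`. -/
def ParInv (P : MLLLink) (v0 : ℕ) (cf : Config) : Prop :=
  v0 ∈ cf.tree.V ∧ cf.tree.kind v0 = DNodeKind.par P ∧
  ∀ x ∈ cf.tree.V, ∀ y ∈ cf.tree.V, ∀ s s',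
    cf.tree.kind x = DNodeKind.labeled s → cf.tree.kind y = DNodeKind.labeled s' →
    DLabel.left P ∈ s → DLabel.right P ∈ s' →
    ∀ w : cf.tree.graph.Walk x y, v0 ∈ w.support

theorem elim_edges_spec (T : PreTree) (v a : ℕ) :
    ∀ e' ∈ (T.elimAt v a).edges, ∃ e ∈ T.edges, Sym2.map (replaceN v a) e = e' := by
  intro e' he'
  obtain ⟨he'', _⟩ := Finset.mem_filter.1 he'
  obtain ⟨e, he, rfl⟩ := Finset.mem_image.1 he''
  exact ⟨e, he, rfl⟩

theorem contract_edges_spec (T : PreTree) (a n' : ℕ) :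
    ∀ e' ∈ (T.contract a n').edges, ∃ e ∈ T.edges, Sym2.map (replaceN n' a) e = e' := by
  intro e' he'
  obtain ⟨he'', _⟩ := Finset.mem_filter.1 he'
  obtain ⟨e, he, rfl⟩ := Finset.mem_image.1 he''
  exact ⟨e, he, rfl⟩

theorem step_preserves_ParInv {P : MLLLink} {v0 : ℕ} {r : RRule} {cf cf' : Config}
    (hinv : ParInv P v0 cf) (hstep : Step r cf cf') : ParInv P v0 cf' := by
  obtain ⟨hv0V, hv0k, hwalks⟩ := hinv
  cases hstep with
  | elim c v L s hactV hvV hkact hkv hup hedge hls hrs =>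
    have hav : cf.active ≠ v := by
      intro h; rw [h, hkv] at hkact; exact absurd hkact (by simp)
    have hvv0 : v ≠ v0 := by
      intro h
      rw [h, hv0k] at hkv
      injection hkv with hLP
      subst hLP
      have := hwalks cf.active hactV cf.active hactV s s hkact hkact hls hrs
        SimpleGraph.Walk.nil
      simp at this
      rw [← this, hv0k] at hkact; exact absurd hkact (by simp)
    refine ⟨Finset.mem_erase.2 ⟨Ne.symm hvv0, hv0V⟩, hv0k, ?_⟩
    intro x hx y hy s1 s2 hk1 hk2 hm1 hm2 w
    have hxV := Finset.mem_of_mem_erase hx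
    have hyV := Finset.mem_of_mem_erase hy
    have hxv : x ≠ v := Finset.ne_of_mem_erase hx
    have hyv : y ≠ v := Finset.ne_of_mem_erase hy
    obtain ⟨w₀, hw₀⟩ := lift_walk hav hedge
      (elim_edges_spec cf.tree v cf.active) w x y
      (by unfold replaceN; rw [if_neg hxv]) (by unfold replaceN; rw [if_neg hyv])
    have := hwalks x hxV y hyV s1 s2 hk1 hk2 hm1 hm2 w₀
    have h2 := hw₀ v0 this
    rwa [show replaceN v cf.active v0 = v0 by unfold replaceN; rw [if_neg (Ne.symm hvv0)]] at h2
  | union c n' s s' hactV hn'V hne hkact hkn' hedge =>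
    have hv0a : v0 ≠ cf.active := by
      intro h; rw [h, hkact] at hv0k; exact absurd hv0k (by simp)
    have hv0n' : v0 ≠ n' := by
      intro h; rw [h, hkn'] at hv0k; exact absurd hv0k (by simp)
    have hkind' : ∀ z, (cf.tree.contract cf.active n').kind z =
        if z = cf.active then DNodeKind.labeled (s ∪ s') else cf.tree.kind z := by
      intro z
      show (if z = cf.active then mergeKind (cf.tree.kind cf.active) (cf.tree.kind n')
        else cf.tree.kind z) = _
      rw [hkact, hkn']
      rfl
    refine ⟨Finset.mem_erase.2 ⟨hv0n', hv0V⟩, by rw [hkind', if_neg hv0a]; exact hv0k, ?_⟩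
    intro x hx y hy s1 s2 hk1 hk2 hm1 hm2 w
    have hxv : x ≠ n' := Finset.ne_of_mem_erase hx
    have hyv : y ≠ n' := Finset.ne_of_mem_erase hy
    -- find original carriers
    have findx : ∀ z, z ∈ (cf.tree.contract cf.active n').V →
        ∀ t, (cf.tree.contract cf.active n').kind z = DNodeKind.labeled t →
        ∀ d, d ∈ t → ∃ z₀ ∈ cf.tree.V, (∃ t₀, cf.tree.kind z₀ = DNodeKind.labeled t₀ ∧ d ∈ t₀)
          ∧ replaceN n' cf.active z₀ = z := by
      intro z hz t hkt d hd
      rw [hkind'] at hkt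
      by_cases hza : z = cf.active
      · rw [if_pos hza] at hkt
        injection hkt with ht
        subst ht
        rcases Finset.mem_union.1 hd with hd | hd
        · exact ⟨cf.active, hactV, ⟨s, hkact, hd⟩,
            by unfold replaceN; rw [hza, if_neg (Ne.symm hne)]⟩
        · exact ⟨n', hn'V, ⟨s', hkn', hd⟩, by unfold replaceN; rw [if_pos rfl, hza]⟩
      · rw [if_neg hza] at hkt
        exact ⟨z, Finset.mem_of_mem_erase hz, ⟨t, hkt, hd⟩,
          by unfold replaceN; rw [if_neg (Finset.ne_of_mem_erase hz)]⟩
    obtain ⟨x₀, hx₀V, ⟨t₀, hkx₀, hdx₀⟩, hfx⟩ := findx x hx s1 hk1 _ hm1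
    obtain ⟨y₀, hy₀V, ⟨t₁, hky₀, hdy₀⟩, hfy⟩ := findx y hy s2 hk2 _ hm2
    obtain ⟨w₀, hw₀⟩ := lift_walk (hne : n' ≠ cf.active).symm hedge
      (contract_edges_spec cf.tree cf.active n') w x₀ y₀ hfx hfy
    have := hwalks x₀ hx₀V y₀ hy₀V t₀ t₁ hkx₀ hky₀ hdx₀ hdy₀ w₀
    have h2 := hw₀ v0 this
    rwa [show replaceN n' cf.active v0 = v0 by unfold replaceN; rw [if_neg hv0n']] at h2
  | jump c v m L s s' _ _ _ _ _ _ _ _ _ _ =>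
    exact ⟨hv0V, hv0k, hwalks⟩

theorem rtg_preserves_ParInv {P : MLLLink} {v0 : ℕ} {cf cf' : Config}
    (h : Relation.ReflTransGen StepAny cf cf') (hinv : ParInv P v0 cf) : ParInv P v0 cf' := by
  induction h with
  | refl => exact hinv
  | tail _ hstep ih => obtain ⟨r, hr⟩ := hstep; exact step_preserves_ParInv ih hr

theorem inv_not_finalYes {Θ : ProofStructure} {P : MLLLink} {v0 : ℕ} {cf : Config}
    (hinv : ParInv P v0 cf) (hfin : FinalYes Θ cf) : False := by
  obtain ⟨hv0V, hv0k, _⟩ := hinv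
  obtain ⟨hV, _, s, hks, _⟩ := hfin
  rw [hV, Finset.mem_singleton] at hv0V
  rw [hv0V, hks] at hv0k
  exact absurd hv0k (by simp)
/-! ## Termination of the rewriting system -/

def parsOf (t : PreTree) : Finset MLLLink :=
  t.V.biUnion (fun v => match t.kind v with
    | DNodeKind.par L => {L}
    | _ => ∅)

theorem mem_parsOf (t : PreTree) (L : MLLLink) :
    L ∈ parsOf t ↔ ∃ v ∈ t.V, t.kind v = DNodeKind.par L := by
  unfold parsOf
  simp only [Finset.mem_biUnion]
  constructor
  · rintro ⟨v, hv, hm⟩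
    refine ⟨v, hv, ?_⟩
    cases h : t.kind v <;> rw [h] at hm <;> simp at hm
    rw [hm]
  · rintro ⟨v, hv, hk⟩
    exact ⟨v, hv, by rw [hk]; simp⟩

def measureC (cf : Config) : ℕ := cf.tree.V.card + (parsOf cf.tree \ cf.jumped).card

theorem step_lt {r : RRule} {cf cf' : Config} (h : Step r cf cf') :
    measureC cf' < measureC cf := by
  cases h with
  | elim c v L s hactV hvV hkact hkv hup hedge hls hrs =>
    have h1 : ((cf.tree.elimAt v cf.active).V).card < cf.tree.V.card :=
      Finset.card_erase_lt_of_mem hvV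
    have h2 : parsOf (cf.tree.elimAt v cf.active) ⊆ parsOf cf.tree := by
      intro K hK
      rw [mem_parsOf] at hK ⊢
      obtain ⟨u, hu, hk⟩ := hK
      exact ⟨u, Finset.mem_of_mem_erase hu, hk⟩
    have h3 := Finset.card_le_card (Finset.sdiff_subset_sdiff h2 (le_refl cf.jumped))
    dsimp only [measureC]
    omega
  | union c n' s s' hactV hn'V hne hkact hkn' hedge =>
    have h1 : ((cf.tree.contract cf.active n').V).card < cf.tree.V.card :=
      Finset.card_erase_lt_of_mem hn'V
    have h2 : parsOf (cf.tree.contract cf.active n') ⊆ parsOf cf.tree := by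
      intro K hK
      rw [mem_parsOf] at hK ⊢
      obtain ⟨u, hu, hk⟩ := hK
      by_cases hua : u = cf.active
      · exfalso
        have : (cf.tree.contract cf.active n').kind u =
            mergeKind (cf.tree.kind cf.active) (cf.tree.kind n') := by
          show (if u = cf.active then _ else _) = _
          rw [if_pos hua]
        rw [this, hkact, hkn'] at hk
        exact absurd hk (by simp [mergeKind])
      · have : (cf.tree.contract cf.active n').kind u = cf.tree.kind u := by
          show (if u = cf.active then _ else _) = _
          rw [if_neg hua]
        rw [this] at hk
        exact ⟨u, Finset.mem_of_mem_erase hu, hk⟩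
    have h3 := Finset.card_le_card (Finset.sdiff_subset_sdiff h2 (le_refl cf.jumped))
    dsimp only [measureC]
    omega
  | jump c v m L s s' hactV hvV hmV hkact hkv hedge hup hkm hrm hLj =>
    dsimp only [measureC]
    have hL : L ∈ parsOf cf.tree \ cf.jumped :=
      Finset.mem_sdiff.2 ⟨(mem_parsOf _ _).2 ⟨v, hvV, hkv⟩, hLj⟩
    have : parsOf cf.tree \ insert L cf.jumped = (parsOf cf.tree \ cf.jumped).erase L := by
      ext a; simp [Finset.mem_sdiff, Finset.mem_erase, Finset.mem_insert]; tauto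
    rw [this]
    have := Finset.card_erase_lt_of_mem hL
    omega

theorem exists_stuck (cf : Config) :
    ∃ cf', Relation.ReflTransGen StepAny cf cf' ∧ Stuck cf' := by
  generalize h : measureC cf = n
  induction n using Nat.strong_induction_on generalizing cf with
  | _ n ih =>
    by_cases hs : Stuck cf
    · exact ⟨cf, Relation.ReflTransGen.refl, hs⟩
    · have hex : ∃ r c2, Step r cf c2 := by
        unfold Stuck at hs; push_neg at hs; exact hs
      obtain ⟨r, c2, hstep⟩ := hex
      obtain ⟨cf', h1, h2⟩ := ih (measureC c2) (h ▸ step_lt hstep) c2 rfl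
      exact ⟨cf', Relation.ReflTransGen.head ⟨r, hstep⟩ h1, h2⟩
/-! ## Walks in the extreme-left DR-graph -/

theorem adjL (Θ : ProofStructure) {L : MLLLink} (hL : L ∈ Θ.links) {x y : Occ}
    (hxy : x ≠ y) (h : drStep extremeLeft L x y) : (DRGraphL Θ).Adj x y :=
  ⟨hxy, L, hL, Or.inl h⟩

theorem drStep_par (l r c x y : Occ) :
    drStep extremeLeft (MLLLink.par l r c) x y ↔ (x = l ∧ y = c) := by
  show (if extremeLeft (MLLLink.par l r c) = true then x = r ∧ y = c else x = l ∧ y = c) ↔ _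
  simp [extremeLeft]

theorem drStep_mem_occSet (Θ : ProofStructure) {L : MLLLink} (hL : L ∈ Θ.links)
    {x y : Occ} (hd : drStep extremeLeft L x y) :
    x ∈ Θ.occSet ∧ y ∈ Θ.occSet := by
  cases L with
  | id c1 c2 =>
    obtain ⟨rfl, rfl⟩ := hd
    constructor <;> exact ⟨_, hL, Or.inl (by simp [MLLLink.concs])⟩
  | tensor a b cc =>
    rcases hd with ⟨rfl, rfl⟩ | ⟨rfl, rfl⟩ <;>
      exact ⟨⟨_, hL, Or.inr (by simp [MLLLink.prems])⟩,
        ⟨_, hL, Or.inl (by simp [MLLLink.concs])⟩⟩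
  | par a b cc =>
    rw [drStep_par] at hd
    obtain ⟨rfl, rfl⟩ := hd
    exact ⟨⟨_, hL, Or.inr (by simp [MLLLink.prems])⟩,
      ⟨_, hL, Or.inl (by simp [MLLLink.concs])⟩⟩

theorem adj_mem_occSet (Θ : ProofStructure) {x y : Occ} (h : (DRGraphL Θ).Adj x y) :
    x ∈ Θ.occSet ∧ y ∈ Θ.occSet := by
  obtain ⟨hxy, L, hL, hd | hd⟩ := h
  · exact drStep_mem_occSet Θ hL hd
  · exact (drStep_mem_occSet Θ hL hd).symm

theorem walk_support_occSet (Θ : ProofStructure) {u v : Occ}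
    (w : (DRGraphL Θ).Walk u v) (hu : u ∈ Θ.occSet) :
    ∀ z ∈ w.support, z ∈ Θ.occSet := by
  induction w with
  | nil => intro z hz; rw [SimpleGraph.Walk.support_nil, List.mem_singleton] at hz; rwa [hz]
  | cons h p ih =>
    intro z hz
    rw [SimpleGraph.Walk.support_cons, List.mem_cons] at hz
    rcases hz with rfl | hz
    · exact hu
    · exact ih (adj_mem_occSet Θ h).2 z hz

theorem lift_to_induce {G : SimpleGraph ℕ} {S : Set ℕ} :
    ∀ {u v : ℕ} (w : G.Walk u v) (hu : u ∈ S) (hv : v ∈ S),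
      (∀ z ∈ w.support, z ∈ S) →
      ∃ w' : (G.induce S).Walk ⟨u, hu⟩ ⟨v, hv⟩,
        w'.support.map Subtype.val = w.support := by
  intro u v w
  induction w with
  | nil => intro hu hv _; exact ⟨SimpleGraph.Walk.nil, by simp⟩
  | @cons u m v h p ih =>
    intro hu hv hS
    have hm : m ∈ S := hS m (by simp [SimpleGraph.Walk.support_cons])
    obtain ⟨w', hw'⟩ := ih hm hv (fun z hz => hS z (by
      rw [SimpleGraph.Walk.support_cons]; exact List.mem_cons_of_mem _ hz))
    have hadj : (G.induce S).Adj ⟨u, hu⟩ ⟨m, hm⟩ := h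
    exact ⟨SimpleGraph.Walk.cons hadj w', by
      rw [SimpleGraph.Walk.support_cons, SimpleGraph.Walk.support_cons, List.map_cons, hw']⟩

theorem path_support_unique (Θ : ProofStructure) (hT : DRTreeL Θ) {u v : Occ}
    (p q : (DRGraphL Θ).Walk u v) (hp : p.IsPath) (hq : q.IsPath)
    (hu : u ∈ Θ.occSet) (hv : v ∈ Θ.occSet) :
    p.support = q.support := by
  obtain ⟨p', hp'⟩ := lift_to_induce p hu hv (walk_support_occSet Θ p hu)
  obtain ⟨q', hq'⟩ := lift_to_induce q hu hv (walk_support_occSet Θ q hu)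
  have hpp : p'.IsPath := SimpleGraph.Walk.IsPath.mk'
    (List.Nodup.of_map Subtype.val (by rw [hp']; exact hp.support_nodup))
  have hqp : q'.IsPath := SimpleGraph.Walk.IsPath.mk'
    (List.Nodup.of_map Subtype.val (by rw [hq']; exact hq.support_nodup))
  obtain ⟨pu, -, hun⟩ := hT.existsUnique_path ⟨u, hu⟩ ⟨v, hv⟩
  have : p' = q' := (hun p' hpp).trans (hun q' hqp).symm
  rw [← hp', ← hq', this]
/-! ## Mapping walks of the translation to walks of the DR-graph -/

def RepO (Θ : ProofStructure) (n : ℕ) (o : Occ) : Prop :=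
  (∃ K ∈ Θ.links, ¬ MLLLink.IsPar K ∧ n = mainN K ∧
    (o ∈ MLLLink.concs K ∨ o ∈ MLLLink.prems K)) ∨
  (∃ lq rq cq, MLLLink.par lq rq cq ∈ Θ.links ∧
    n = mainN (MLLLink.par lq rq cq) ∧ (o = lq ∨ o = cq)) ∨
  (∃ K, hasAux Θ K ∧ n = auxN K ∧ o ∈ MLLLink.concs K)

theorem walk_within_nonpar (Θ : ProofStructure) {K : MLLLink} (hK : K ∈ Θ.links)
    (hnp : ¬ MLLLink.IsPar K) {o o' : Occ}
    (ho : o ∈ MLLLink.concs K ∨ o ∈ MLLLink.prems K)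
    (ho' : o' ∈ MLLLink.concs K ∨ o' ∈ MLLLink.prems K) :
    ∃ q : (DRGraphL Θ).Walk o o',
      ∀ z ∈ q.support, z = o ∨ z = o' ∨ z ∈ MLLLink.concs K := by
  have hnd := Θ.nodupLink K hK
  cases K with
  | id c1 c2 =>
    simp [MLLLink.concs, MLLLink.prems] at ho ho' hnd
    have hadj : (DRGraphL Θ).Adj c1 c2 := adjL Θ hK hnd ⟨rfl, rfl⟩
    rcases ho with rfl | rfl <;> rcases ho' with rfl | rfl
    · exact ⟨SimpleGraph.Walk.nil, by simp⟩
    · exact ⟨hadj.toWalk, by simp⟩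
    · exact ⟨hadj.symm.toWalk, by simp⟩
    · exact ⟨SimpleGraph.Walk.nil, by simp⟩
  | tensor a b cc =>
    simp [MLLLink.concs, MLLLink.prems] at ho ho' hnd
    obtain ⟨⟨hca, hcb⟩, -⟩ := hnd
    have toConc : ∀ z, (z = cc ∨ z = a ∨ z = b) →
        ∃ q : (DRGraphL Θ).Walk z cc, ∀ w ∈ q.support, w = z ∨ w = cc := by
      rintro z (rfl | rfl | rfl)
      · exact ⟨SimpleGraph.Walk.nil, by simp⟩
      · exact ⟨(adjL Θ hK (fun h => hca h.symm) (Or.inl ⟨rfl, rfl⟩)).toWalk, by simp⟩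
      · exact ⟨(adjL Θ hK (fun h => hcb h.symm) (Or.inr ⟨rfl, rfl⟩)).toWalk, by simp⟩
    obtain ⟨q1, hq1⟩ := toConc o (by tauto)
    obtain ⟨q2, hq2⟩ := toConc o' (by tauto)
    refine ⟨q1.append q2.reverse, fun z hz => ?_⟩
    rw [SimpleGraph.Walk.mem_support_append_iff] at hz
    rcases hz with hz | hz
    · rcases hq1 z hz with rfl | rfl
      · exact Or.inl rfl
      · exact Or.inr (Or.inr (by simp [MLLLink.concs]))
    · rw [SimpleGraph.Walk.support_reverse, List.mem_reverse] at hz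
      rcases hq2 z hz with rfl | rfl
      · exact Or.inr (Or.inl rfl)
      · exact Or.inr (Or.inr (by simp [MLLLink.concs]))
  | par a b cc => exact absurd trivial hnp

theorem rep_connect (Θ : ProofStructure) {l r c : Occ}
    (hP : MLLLink.par l r c ∈ Θ.links) {n : ℕ} {o o' : Occ}
    (h : RepO Θ n o) (h' : RepO Θ n o') (ho : o ≠ c) (ho' : o' ≠ c) :
    ∃ q : (DRGraphL Θ).Walk o o', ∀ z ∈ q.support, z ≠ c := by
  rcases h with ⟨K, hK, hnp, rfl, hoK⟩ | ⟨lq, rq, cq, hQ, rfl, hoQ⟩ | ⟨K, hA, rfl, hoK⟩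
  · rcases h' with ⟨K', hK', _, heq, hoK'⟩ | ⟨lq, rq, cq, hQ, heq, hoQ⟩ | ⟨K', hA', heq, _⟩
    · have e : K' = K := mainN_inj heq.symm
      rw [e] at hoK'
      obtain ⟨q, hq⟩ := walk_within_nonpar Θ hK hnp hoK hoK'
      refine ⟨q, fun z hz => ?_⟩
      rcases hq z hz with rfl | rfl | hz'
      · exact ho
      · exact ho'
      · intro hzc
        rw [hzc] at hz'
        have : K = MLLLink.par l r c :=
          Θ.concUnique K hK _ hP c hz' (by simp [MLLLink.concs])
        rw [this] at hnp
        exact hnp trivial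
    · have e : MLLLink.par lq rq cq = K := mainN_inj heq.symm
      rw [← e] at hnp
      exact absurd trivial hnp
    · exact absurd heq (mainN_ne_auxN K K')
  · rcases h' with ⟨K', hK', hnp', heq, _⟩ | ⟨lq', rq', cq', hQ', heq, hoQ'⟩ | ⟨K', hA', heq, _⟩
    · have e : K' = MLLLink.par lq rq cq := mainN_inj heq.symm
      rw [e] at hnp'
      exact absurd trivial hnp'
    · have e : MLLLink.par lq' rq' cq' = MLLLink.par lq rq cq := mainN_inj heq.symm
      injection e with e1 e2 e3
      rw [e1, e3] at hoQ'
      have hnd := Θ.nodupLink _ hQ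
      simp [MLLLink.concs, MLLLink.prems] at hnd
      have hadj : (DRGraphL Θ).Adj lq cq :=
        adjL Θ hQ (fun h => hnd.1.1 h.symm) ((drStep_par lq rq cq lq cq).2 ⟨rfl, rfl⟩)
      rcases hoQ with rfl | rfl <;> rcases hoQ' with h2 | h2
      · rw [h2]; exact ⟨SimpleGraph.Walk.nil, by intro z hz; simp at hz; rw [hz]; exact ho⟩
      · rw [h2] at ho' ⊢
        refine ⟨hadj.toWalk, fun z hz => ?_⟩
        simp [SimpleGraph.Walk.support_cons] at hz
        rcases hz with rfl | rfl
        · exact ho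
        · exact ho'
      · rw [h2] at ho' ⊢
        refine ⟨hadj.symm.toWalk, fun z hz => ?_⟩
        simp [SimpleGraph.Walk.support_cons] at hz
        rcases hz with rfl | rfl
        · exact ho
        · exact ho'
      · rw [h2]; exact ⟨SimpleGraph.Walk.nil, by intro z hz; simp at hz; rw [hz]; exact ho⟩
    · exact absurd heq (mainN_ne_auxN _ K')
  · rcases h' with ⟨K', hK', _, heq, _⟩ | ⟨lq, rq, cq, hQ, heq, _⟩ | ⟨K', hA', heq, hoK'⟩
    · exact absurd heq.symm (mainN_ne_auxN K' K)
    · exact absurd heq.symm (mainN_ne_auxN _ K)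
    · have e : K' = K := auxN_inj heq.symm
      rw [e] at hoK'
      obtain ⟨-, la, ra, ca, hKe, -⟩ := hA
      rw [hKe] at hoK hoK'
      simp [MLLLink.concs] at hoK hoK'
      rw [hoK, hoK']
      exact ⟨SimpleGraph.Walk.nil, by intro z hz; simp at hz; rw [hz, ← hoK]; exact ho⟩
def BadN (Θ : ProofStructure) (P : MLLLink) (n : ℕ) : Prop :=
  n = mainN P ∨ (hasAux Θ P ∧ n = auxN P)

theorem rep_out (Θ : ProofStructure) {K : MLLLink} (hK : K ∈ Θ.links) {u : ℕ}
    (hOut : OutIs Θ mainN auxN K u) {x : Occ} (hxK : x ∈ MLLLink.concs K) :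
    RepO Θ u x := by
  rcases hOut with ⟨hA, rfl⟩ | ⟨hnA, rfl⟩
  · exact Or.inr (Or.inr ⟨K, hA, rfl, hxK⟩)
  · by_cases hp : MLLLink.IsPar K
    · cases K with
      | id c1 c2 => exact absurd hp (by simp [MLLLink.IsPar])
      | tensor a b cc => exact absurd hp (by simp [MLLLink.IsPar])
      | par a b cc =>
        simp [MLLLink.concs] at hxK
        exact Or.inr (Or.inl ⟨a, b, cc, hK, rfl, Or.inr hxK⟩)
    · exact Or.inl ⟨K, hK, hp, rfl, Or.inl hxK⟩

theorem out_ne_c (Θ : ProofStructure) {l r c : Occ} (hP : MLLLink.par l r c ∈ Θ.links)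
    {K : MLLLink} (hK : K ∈ Θ.links) {u : ℕ} (hOut : OutIs Θ mainN auxN K u)
    (hu : ¬ BadN Θ (MLLLink.par l r c) u) {x : Occ} (hxK : x ∈ MLLLink.concs K) :
    x ≠ c := by
  intro h
  rw [h] at hxK
  have he : K = MLLLink.par l r c := Θ.concUnique K hK _ hP c hxK (by simp [MLLLink.concs])
  rw [he] at hOut
  rcases hOut with ⟨hA, h2⟩ | ⟨_, h2⟩
  · exact hu (Or.inr ⟨hA, h2⟩)
  · exact hu (Or.inl h2)

theorem edge_map_dir (Θ : ProofStructure) {l r c : Occ} (hP : MLLLink.par l r c ∈ Θ.links)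
    {u v : ℕ} (hES : EdgeSpec Θ mainN auxN u v)
    (hu : ¬ BadN Θ (MLLLink.par l r c) u) (hv : ¬ BadN Θ (MLLLink.par l r c) v) :
    ∃ o1 o2, RepO Θ u o1 ∧ RepO Θ v o2 ∧
      ((DRGraphL Θ).Adj o1 o2 ∨ o1 = o2) ∧ o1 ≠ c ∧ o2 ≠ c := by
  rcases hES with ⟨x, K, M, hK, hM, hxK, hxM, hMnp, hOut, rfl⟩ |
    ⟨K, lq, rq, cq, hK, hQ, hlq, hOut, rfl⟩ | ⟨L, hA, rfl, rfl⟩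
  · cases M with
    | id c1 c2 => simp [MLLLink.prems] at hxM
    | par a b cc => exact absurd trivial hMnp
    | tensor a b cc =>
      have hnd := Θ.nodupLink _ hM
      simp [MLLLink.concs, MLLLink.prems] at hnd
      have hxne : x ≠ c := out_ne_c Θ hP hK hOut hu hxK
      have hccne : cc ≠ c := by
        intro h
        rw [h] at hM
        have := Θ.concUnique _ hM _ hP c (by simp [MLLLink.concs]) (by simp [MLLLink.concs])
        simp at this
      refine ⟨x, cc, rep_out Θ hK hOut hxK,
        Or.inl ⟨_, hM, by simp [MLLLink.IsPar], rfl, Or.inl (by simp [MLLLink.concs])⟩,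
        ?_, hxne, hccne⟩
      simp [MLLLink.prems] at hxM
      rcases hxM with rfl | rfl
      · exact Or.inl (adjL Θ hM (fun h => hnd.1.1 h.symm) (Or.inl ⟨rfl, rfl⟩))
      · exact Or.inl (adjL Θ hM (fun h => hnd.1.2 h.symm) (Or.inr ⟨rfl, rfl⟩))
  · have hnd := Θ.nodupLink _ hQ
    simp [MLLLink.concs, MLLLink.prems] at hnd
    have hlne : lq ≠ c := out_ne_c Θ hP hK hOut hu hlq
    have hcqne : cq ≠ c := by
      intro h
      rw [h] at hQ
      have := Θ.concUnique _ hQ _ hP c (by simp [MLLLink.concs]) (by simp [MLLLink.concs])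
      injection this with e1 e2 e3
      exact hv (Or.inl (by rw [h, e1, e2]))
    exact ⟨lq, cq, rep_out Θ hK hOut hlq,
      Or.inr (Or.inl ⟨lq, rq, cq, hQ, rfl, Or.inr rfl⟩),
      Or.inl (adjL Θ hQ (fun h => hnd.1.1 h.symm) ((drStep_par lq rq cq lq cq).2 ⟨rfl, rfl⟩)),
      hlne, hcqne⟩
  · have hA' := hA
    obtain ⟨hL, la, ra, ca, hLe, hprem⟩ := hA'
    have hcane : ca ≠ c := by
      intro h
      rw [hLe] at hL
      rw [h] at hL hLe
      have := Θ.concUnique _ hL _ hP c (by simp [MLLLink.concs]) (by simp [MLLLink.concs])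
      injection this with e1 e2 e3
      exact hu (Or.inl (by rw [hLe, e1, e2]))
    refine ⟨ca, ca, ?_, Or.inr (Or.inr ⟨L, hA, rfl, by rw [hLe]; simp [MLLLink.concs]⟩),
      Or.inr rfl, hcane, hcane⟩
    rw [hLe]
    exact Or.inr (Or.inl ⟨la, ra, ca, by rw [← hLe]; exact hL, rfl, Or.inr rfl⟩)

theorem edge_map (Θ : ProofStructure) {l r c : Occ} (hP : MLLLink.par l r c ∈ Θ.links)
    {n1 n2 : ℕ} (he : s(n1, n2) ∈ TEdges Θ)
    (h1 : ¬ BadN Θ (MLLLink.par l r c) n1) (h2 : ¬ BadN Θ (MLLLink.par l r c) n2) :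
    ∃ o1 o2, RepO Θ n1 o1 ∧ RepO Θ n2 o2 ∧
      ((DRGraphL Θ).Adj o1 o2 ∨ o1 = o2) ∧ o1 ≠ c ∧ o2 ≠ c := by
  obtain ⟨u, v, heq, hdir⟩ := (mem_TEdges Θ _).1 he
  rw [Sym2.eq_iff] at heq
  have key : EdgeSpec Θ mainN auxN n1 n2 ∨ EdgeSpec Θ mainN auxN n2 n1 := by
    rcases heq with ⟨hu, hv⟩ | ⟨hu, hv⟩ <;> rcases hdir with h | h
    · exact Or.inl (hu ▸ hv ▸ h)
    · exact Or.inr (hu ▸ hv ▸ h)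
    · exact Or.inr (hu ▸ hv ▸ h)
    · exact Or.inl (hu ▸ hv ▸ h)
  rcases key with h | h
  · exact edge_map_dir Θ hP h h1 h2
  · obtain ⟨o1, o2, r1, r2, hao, hc1, hc2⟩ := edge_map_dir Θ hP h h2 h1
    refine ⟨o2, o1, r2, r1, ?_, hc2, hc1⟩
    rcases hao with hao | hao
    · exact Or.inl hao.symm
    · exact Or.inr hao.symm
theorem walk_map (Θ : ProofStructure) {l r c : Occ} (hP : MLLLink.par l r c ∈ Θ.links) :
    ∀ {n1 n2 : ℕ} (w : (TT Θ).graph.Walk n1 n2),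
      (∀ z ∈ w.support, ¬ BadN Θ (MLLLink.par l r c) z) →
      ∀ {o1 : Occ}, RepO Θ n1 o1 → o1 ≠ c → ∀ {o2 : Occ}, RepO Θ n2 o2 → o2 ≠ c →
      ∃ q : (DRGraphL Θ).Walk o1 o2, ∀ z ∈ q.support, z ≠ c := by
  intro n1 n2 w
  induction w with
  | nil =>
    intro _ o1 h1 hc1 o2 h2 hc2
    exact rep_connect Θ hP h1 h2 hc1 hc2
  | @cons n1 m n2 hadj p ih =>
    intro hB o1 h1 hc1 o2 h2 hc2
    have hBn1 : ¬ BadN Θ (MLLLink.par l r c) n1 := hB n1 (by simp)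
    have hBm : ¬ BadN Θ (MLLLink.par l r c) m := hB m (by
      rw [SimpleGraph.Walk.support_cons]
      exact List.mem_cons_of_mem _ p.start_mem_support)
    obtain ⟨ou, ov, hru, hrv, hao, hcu, hcv⟩ := edge_map Θ hP hadj.2 hBn1 hBm
    obtain ⟨q1, hq1⟩ := rep_connect Θ hP h1 hru hc1 hcu
    have hB' : ∀ z ∈ p.support, ¬ BadN Θ (MLLLink.par l r c) z := fun z hz =>
      hB z (by rw [SimpleGraph.Walk.support_cons]; exact List.mem_cons_of_mem _ hz)
    rcases hao with hao | rfl
    · obtain ⟨q2, hq2⟩ := ih hB' hrv hcv h2 hc2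
      refine ⟨q1.append (SimpleGraph.Walk.cons hao q2), fun z hz => ?_⟩
      rw [SimpleGraph.Walk.mem_support_append_iff] at hz
      rcases hz with hz | hz
      · exact hq1 z hz
      · rw [SimpleGraph.Walk.support_cons, List.mem_cons] at hz
        rcases hz with rfl | hz
        · exact hcu
        · exact hq2 z hz
    · obtain ⟨q2, hq2⟩ := ih hB' hrv hcv h2 hc2
      refine ⟨q1.append q2, fun z hz => ?_⟩
      rw [SimpleGraph.Walk.mem_support_append_iff] at hz
      rcases hz with hz | hz
      · exact hq1 z hz
      · exact hq2 z hz

theorem path_avoid (G : SimpleGraph ℕ) (aP v0 : ℕ)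
    (hnbr : ∀ n1 n2, G.Adj aP n1 → G.Adj aP n2 → n1 ≠ v0 → n2 ≠ v0 → n1 = n2) :
    ∀ {x y : ℕ} (p : G.Walk x y), p.IsPath → (∀ z ∈ p.support, z ≠ v0) →
      x ≠ aP → y ≠ aP → aP ∉ p.support := by
  intro x y p
  induction p with
  | nil =>
    intro _ _ hx _
    rw [SimpleGraph.Walk.support_nil, List.mem_singleton]
    exact fun h => hx h.symm
  | @cons x x' y h p ih =>
    intro hpath hav hx hy
    rw [SimpleGraph.Walk.support_cons, List.mem_cons]
    rintro (he | he)
    · exact hx he.symm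
    · by_cases hx' : x' = aP
      · subst hx'
        cases p with
        | nil => exact hy rfl
        | @cons x' x'' y h2 p2 =>
          have hxv0 : x ≠ v0 := hav x (by simp)
          have hx''v0 : x'' ≠ v0 := hav x'' (by
            rw [SimpleGraph.Walk.support_cons, SimpleGraph.Walk.support_cons]
            exact List.mem_cons_of_mem _ (List.mem_cons_of_mem _ p2.start_mem_support))
          have : x = x'' := hnbr x x'' h.symm h2 hxv0 hx''v0
          rw [SimpleGraph.Walk.cons_isPath_iff] at hpath
          exact hpath.2 (by
            rw [this, SimpleGraph.Walk.support_cons]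
            exact List.mem_cons_of_mem _ p2.start_mem_support)
      · rw [SimpleGraph.Walk.cons_isPath_iff] at hpath
        exact ih hpath.1 (fun z hz => hav z (by
          rw [SimpleGraph.Walk.support_cons]; exact List.mem_cons_of_mem _ hz)) hx' hy he

theorem auxP_adj (Θ : ProofStructure) {l r c : Occ} (hP : MLLLink.par l r c ∈ Θ.links)
    {n : ℕ} (h : (TT Θ).graph.Adj (auxN (MLLLink.par l r c)) n)
    (hn : n ≠ mainN (MLLLink.par l r c)) :
    ∃ rq cq, MLLLink.par c rq cq ∈ Θ.links ∧ n = mainN (MLLLink.par c rq cq) := by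
  have hmem : s(auxN (MLLLink.par l r c), n) ∈ TEdges Θ := h.2
  obtain ⟨u, v, heq, hdir⟩ := (mem_TEdges Θ _).1 hmem
  rw [Sym2.eq_iff] at heq
  have key : ∀ u' v', EdgeSpec Θ mainN auxN u' v' →
      ((u' = auxN (MLLLink.par l r c) ∧ v' = n) ∨
       (v' = auxN (MLLLink.par l r c) ∧ u' = n)) →
      ∃ rq cq, MLLLink.par c rq cq ∈ Θ.links ∧ n = mainN (MLLLink.par c rq cq) := by
    intro u' v' hES hcase
    rcases hES with ⟨x, K, M, hK, hM, hxK, hxM, hMnp, hOut, rfl⟩ |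
      ⟨K, lq, rq, cq, hK, hQ, hlq, hOut, rfl⟩ | ⟨L, hA, rfl, rfl⟩
    · rcases hcase with ⟨hu', hv'⟩ | ⟨hv', hu'⟩
      · -- u' is the aux node: impossible since x = c is premise of non-par M
        rcases hOut with ⟨hAK, rfl⟩ | ⟨_, rfl⟩
        · have hKP : K = MLLLink.par l r c := auxN_inj hu'
          subst hKP
          simp [MLLLink.concs] at hxK
          subst hxK
          obtain ⟨-, l', r', c', hEq, Q, hQ⟩ := hAK
          injection hEq with e1 e2 e3
          exfalso
          rcases hQ with ⟨hQl, rr, cc, rfl⟩ | ⟨hQl, ll, cc, rfl⟩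
          · have := Θ.premUnique M hM _ hQl _ hxM (by rw [← e3]; simp [MLLLink.prems])
            rw [this] at hMnp
            exact hMnp trivial
          · have := Θ.premUnique M hM _ hQl _ hxM (by rw [← e3]; simp [MLLLink.prems])
            rw [this] at hMnp
            exact hMnp trivial
        · exact absurd hu' (mainN_ne_auxN K _)
      · exact absurd hv' (mainN_ne_auxN M _)
    · rcases hcase with ⟨hu', hv'⟩ | ⟨hv', hu'⟩
      · rcases hOut with ⟨hAK, rfl⟩ | ⟨_, rfl⟩
        · have hKP : K = MLLLink.par l r c := auxN_inj hu'
          subst hKP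
          simp [MLLLink.concs] at hlq
          subst hlq
          exact ⟨rq, cq, hQ, hv'.symm⟩
        · exact absurd hu' (mainN_ne_auxN K _)
      · exact absurd hv' (mainN_ne_auxN _ _)
    · rcases hcase with ⟨hu', hv'⟩ | ⟨hv', hu'⟩
      · exact absurd hu' (mainN_ne_auxN L _)
      · have hLP : L = MLLLink.par l r c := auxN_inj hv'
        rw [hLP] at hu'
        exact absurd hu'.symm hn
  rcases heq with ⟨h1, h2⟩ | ⟨h1, h2⟩ <;> rcases hdir with hd | hd
  · exact key u v hd (Or.inl ⟨h1.symm, h2.symm⟩)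
  · exact key v u hd (Or.inr ⟨h1.symm, h2.symm⟩)
  · exact key u v hd (Or.inr ⟨h1.symm, h2.symm⟩)
  · exact key v u hd (Or.inl ⟨h1.symm, h2.symm⟩)

theorem auxP_nbr_unique (Θ : ProofStructure) {l r c : Occ}
    (hP : MLLLink.par l r c ∈ Θ.links) :
    ∀ n1 n2, (TT Θ).graph.Adj (auxN (MLLLink.par l r c)) n1 →
      (TT Θ).graph.Adj (auxN (MLLLink.par l r c)) n2 →
      n1 ≠ mainN (MLLLink.par l r c) → n2 ≠ mainN (MLLLink.par l r c) → n1 = n2 := by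
  intro n1 n2 h1 h2 hn1 hn2
  obtain ⟨rq1, cq1, hQ1, he1⟩ := auxP_adj Θ hP h1 hn1
  obtain ⟨rq2, cq2, hQ2, he2⟩ := auxP_adj Θ hP h2 hn2
  have : MLLLink.par c rq1 cq1 = MLLLink.par c rq2 cq2 :=
    Θ.premUnique _ hQ1 _ hQ2 c (by simp [MLLLink.prems]) (by simp [MLLLink.prems])
  rw [he1, he2, this]
theorem linkLabel_left (Θ : ProofStructure) {l r c : Occ} {K : MLLLink}
    (hll : linkLabel Θ K (DLabel.left (MLLLink.par l r c))) : l ∈ MLLLink.concs K := by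
  obtain ⟨o, hoK, hlab⟩ := hll
  rcases hlab with ⟨Q, hQpre, hQe⟩ | ⟨Q, hQpre, hQe⟩
  · injection hQe with e
    obtain ⟨hQl, r2, c2, hpe⟩ := hQpre
    rw [← e] at hpe
    injection hpe with f1 f2 f3
    rw [f1]; exact hoK
  · simp at hQe

theorem linkLabel_right (Θ : ProofStructure) {l r c : Occ} {K : MLLLink}
    (hll : linkLabel Θ K (DLabel.right (MLLLink.par l r c))) : r ∈ MLLLink.concs K := by
  obtain ⟨o, hoK, hlab⟩ := hll
  rcases hlab with ⟨Q, hQpre, hQe⟩ | ⟨Q, hQpre, hQe⟩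
  · simp at hQe
  · injection hQe with e
    obtain ⟨hQl, l2, c2, hpe⟩ := hQpre
    rw [← e] at hpe
    injection hpe with f1 f2 f3
    rw [f2]; exact hoK

theorem carrier_core (Θ : ProofStructure) {x : ℕ} {s : Finset DLabel}
    (hx : x ∈ TV Θ) (hk : TKind Θ x = DNodeKind.labeled s) :
    ∃ K, K ∈ Θ.links ∧ s = labelFin Θ K ∧
      ((¬ MLLLink.IsPar K ∧ x = mainN K) ∨ (hasAux Θ K ∧ x = auxN K)) := by
  rcases (mem_TV Θ x).1 hx with ⟨K, hK, rfl⟩ | ⟨K, hA, rfl⟩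
  · rw [TKind_main Θ K hK] at hk
    by_cases hp : MLLLink.IsPar K
    · rw [if_pos hp] at hk; exact absurd hk (by simp)
    · rw [if_neg hp] at hk
      injection hk with e
      exact ⟨K, hK, e.symm, Or.inl ⟨hp, rfl⟩⟩
  · rw [TKind_aux Θ K hA] at hk
    injection hk with e
    exact ⟨K, hA.1, e.symm, Or.inr ⟨hA, rfl⟩⟩

theorem carrier_left (Θ : ProofStructure) {l r c : Occ} (hP : MLLLink.par l r c ∈ Θ.links)
    {x : ℕ} {s : Finset DLabel} (hx : x ∈ TV Θ) (hk : TKind Θ x = DNodeKind.labeled s)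
    (hm : DLabel.left (MLLLink.par l r c) ∈ s) :
    RepO Θ x l ∧ ¬ BadN Θ (MLLLink.par l r c) x := by
  obtain ⟨K, hK, rfl, hcase⟩ := carrier_core Θ hx hk
  have hlK : l ∈ MLLLink.concs K := linkLabel_left Θ ((mem_labelFin Θ K _).1 hm)
  rcases hcase with ⟨hnp, rfl⟩ | ⟨hA, rfl⟩
  · refine ⟨Or.inl ⟨K, hK, hnp, rfl, Or.inl hlK⟩, ?_⟩
    rintro (hb | ⟨_, hb⟩)
    · have : K = MLLLink.par l r c := mainN_inj hb
      rw [this] at hnp; exact hnp trivial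
    · exact (mainN_ne_auxN K _) hb
  · refine ⟨Or.inr (Or.inr ⟨K, hA, rfl, hlK⟩), ?_⟩
    rintro (hb | ⟨_, hb⟩)
    · exact (mainN_ne_auxN _ K) hb.symm
    · have : K = MLLLink.par l r c := auxN_inj hb
      rw [this] at hlK
      simp [MLLLink.concs] at hlK
      have hnd := Θ.nodupLink _ hP
      simp [MLLLink.concs, MLLLink.prems] at hnd
      exact hnd.1.1 hlK.symm

theorem carrier_right (Θ : ProofStructure) {l r c : Occ} (hP : MLLLink.par l r c ∈ Θ.links)
    {y : ℕ} {s : Finset DLabel} (hy : y ∈ TV Θ) (hk : TKind Θ y = DNodeKind.labeled s)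
    (hm : DLabel.right (MLLLink.par l r c) ∈ s) :
    RepO Θ y r ∧ ¬ BadN Θ (MLLLink.par l r c) y := by
  obtain ⟨K, hK, rfl, hcase⟩ := carrier_core Θ hy hk
  have hrK : r ∈ MLLLink.concs K := linkLabel_right Θ ((mem_labelFin Θ K _).1 hm)
  rcases hcase with ⟨hnp, rfl⟩ | ⟨hA, rfl⟩
  · refine ⟨Or.inl ⟨K, hK, hnp, rfl, Or.inl hrK⟩, ?_⟩
    rintro (hb | ⟨_, hb⟩)
    · have : K = MLLLink.par l r c := mainN_inj hb
      rw [this] at hnp; exact hnp trivial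
    · exact (mainN_ne_auxN K _) hb
  · refine ⟨Or.inr (Or.inr ⟨K, hA, rfl, hrK⟩), ?_⟩
    rintro (hb | ⟨_, hb⟩)
    · exact (mainN_ne_auxN _ K) hb.symm
    · have : K = MLLLink.par l r c := auxN_inj hb
      rw [this] at hrK
      simp [MLLLink.concs] at hrK
      have hnd := Θ.nodupLink _ hP
      simp [MLLLink.concs, MLLLink.prems] at hnd
      exact hnd.1.2 hrK.symm

theorem initial_inv (Θ : ProofStructure) (hdef : TransDefined Θ) {l r c : Occ}
    (hP : MLLLink.par l r c ∈ Θ.links) (p₀ : (DRGraphL Θ).Walk l r) (hp₀ : p₀.IsPath)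
    (hc₀ : c ∈ p₀.support) (n0 : ℕ) :
    ParInv (MLLLink.par l r c) (mainN (MLLLink.par l r c))
      { tree := TT Θ, active := n0, jumped := ∅ } := by
  have hnd := Θ.nodupLink _ hP
  simp [MLLLink.concs, MLLLink.prems] at hnd
  have hlc : l ≠ c := fun h => hnd.1.1 h.symm
  have hrc : r ≠ c := fun h => hnd.1.2 h.symm
  refine ⟨(mem_TV Θ _).2 (Or.inl ⟨_, hP, rfl⟩), ?_, ?_⟩
  · show TKind Θ _ = _
    rw [TKind_main Θ _ hP,
      if_pos (show MLLLink.IsPar (MLLLink.par l r c) from trivial)]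
  · intro x hx y hy s s' hkx hky hls hrs w
    by_contra hni
    obtain ⟨hrx, hbx⟩ := carrier_left Θ hP hx hkx hls
    obtain ⟨hry, hby⟩ := carrier_right Θ hP hy hky hrs
    have hpb : w.bypass.IsPath := w.bypass_isPath
    have hsub := w.support_bypass_subset
    have hnv0 : ∀ z ∈ w.bypass.support, z ≠ mainN (MLLLink.par l r c) :=
      fun z hz he => hni (he ▸ hsub hz)
    have hnB : ∀ z ∈ w.bypass.support, ¬ BadN Θ (MLLLink.par l r c) z := by
      by_cases hA : hasAux Θ (MLLLink.par l r c)
      · have hax : x ≠ auxN (MLLLink.par l r c) := fun he => hbx (Or.inr ⟨hA, he⟩)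
        have hay : y ≠ auxN (MLLLink.par l r c) := fun he => hby (Or.inr ⟨hA, he⟩)
        have hnaux := path_avoid ((TT Θ).graph) (auxN (MLLLink.par l r c))
          (mainN (MLLLink.par l r c)) (auxP_nbr_unique Θ hP) w.bypass hpb hnv0 hax hay
        rintro z hz (hb | ⟨-, hb⟩)
        · exact hnv0 z hz hb
        · exact hnaux (hb ▸ hz)
      · rintro z hz (hb | ⟨hA', -⟩)
        · exact hnv0 z hz hb
        · exact hA hA'
    obtain ⟨q, hq⟩ := walk_map Θ hP w.bypass hnB hrx hlc hry hrc
    have hqb : q.bypass.IsPath := q.bypass_isPath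
    have hl_occ : l ∈ Θ.occSet := ⟨_, hP, Or.inr (by simp [MLLLink.prems])⟩
    have hr_occ : r ∈ Θ.occSet := ⟨_, hP, Or.inr (by simp [MLLLink.prems])⟩
    have hse := path_support_unique Θ hdef.1 p₀ q.bypass hp₀ hqb hl_occ hr_occ
    have hcq : c ∈ q.bypass.support := hse ▸ hc₀
    exact hq c (q.support_bypass_subset hcq) rfl
/-- If Algorithm A with input Θ outputs yes, then every ⅋-link of Θ is
consistent in the extreme-left DR-graph S_∀ℓ(Θ). -/
theorem algorithm_A_yes_implies_par_consistent (Θ : ProofStructure)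
    (hyes : AlgAYes Θ) :
    AllParConsistent Θ := by
  intro l r c hP p hp
  intro hcmem
  have hc : c ∈ p.support := hcmem
  obtain ⟨hdef, halg⟩ := hyes
  obtain ⟨K, hK, hKne, hlK⟩ := Θ.premIsConc _ hP l (by simp [MLLLink.prems])
  have hstart : ∃ n0, (TT Θ).IsLabeledVertex n0 := by
    by_cases hp' : MLLLink.IsPar K
    · cases K with
      | id c1 c2 => exact absurd hp' (by simp [MLLLink.IsPar])
      | tensor a b cc => exact absurd hp' (by simp [MLLLink.IsPar])
      | par a b cc =>
        simp [MLLLink.concs] at hlK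
        have hA : hasAux Θ (MLLLink.par a b cc) := by
          refine ⟨hK, a, b, cc, rfl, ?_⟩
          rw [← hlK]
          exact ⟨MLLLink.par l r c, Or.inl ⟨hP, r, c, rfl⟩⟩
        exact ⟨auxN _, ⟨(mem_TV Θ _).2 (Or.inr ⟨_, hA, rfl⟩),
          labelFin Θ _, TKind_aux Θ _ hA⟩⟩
    · exact ⟨mainN K, ⟨(mem_TV Θ _).2 (Or.inl ⟨K, hK, rfl⟩), labelFin Θ K,
        by show TKind Θ _ = _; rw [TKind_main Θ K hK, if_neg hp']⟩⟩
  obtain ⟨n0, hlab⟩ := hstart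
  obtain ⟨cf', hreach, hstuck⟩ := exists_stuck { tree := TT Θ, active := n0, jumped := ∅ }
  have hfin := halg (TT Θ) (isTranslation_TT Θ hdef) n0 hlab cf' hreach hstuck
  exact inv_not_finalYes (rtg_preserves_ParInv hreach (initial_inv Θ hdef hP p hp hc n0)) hfin
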